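/- Let K be a type of depot indices, let m walks be represented by a function f : Fin m → K × K assigning to each walk its start depot index and end depot index, and suppose that for every k ∈ K the number of walks starting at depot k equals the number of walks ending at depot k, i.e., |{i : (f i).1 = k}| = |{i : (f i).2 = k}|. If there exists i₀ with (f i₀).1 ≠ (f i₀).2 (an infeasible walk), then there exists another index i ≠ i₀ with (f i).1 ≠ (f i).2. Hence whenever one infeasible path is found in a candidate solution, at least one other infeasible path exists. -/

import Mathlib

/-- If the number of walks starting at each depot equals the number of walks
ending there, and one walk is infeasible (start depot ≠ end depot), then some
other walk is infeasible as well. -/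
theorem infeasible_path_not_alone
    {K : Type*} [DecidableEq K] (m : ℕ) (f : Fin m → K × K)
    (hbal : ∀ k : K,
      (Finset.univ.filter (fun i : Fin m => (f i).1 = k)).card =
      (Finset.univ.filter (fun i : Fin m => (f i).2 = k)).card)
    (i₀ : Fin m) (h : (f i₀).1 ≠ (f i₀).2) :
    ∃ i : Fin m, i ≠ i₀ ∧ (f i).1 ≠ (f i).2 := by
  by_contra hc
  push_neg at hc
  set k := (f i₀).1 with hk
  have hB : (Finset.univ.filter (fun i : Fin m => (f i).2 = k)) =
      (Finset.univ.filter (fun i : Fin m => (f i).1 = k)).erase i₀ := by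
    ext i
    simp only [Finset.mem_erase, Finset.mem_filter, Finset.mem_univ, true_and]
    constructor
    · intro hi
      have hne : i ≠ i₀ := by
        rintro rfl; exact h hi.symm
      exact ⟨hne, (hc i hne) ▸ hi⟩
    · rintro ⟨hne, hi⟩
      exact (hc i hne) ▸ hi
  have hmem : i₀ ∈ Finset.univ.filter (fun i : Fin m => (f i).1 = k) := by
    simp [hk]
  have := hbal k
  rw [hB, Finset.card_erase_of_mem hmem] at this
  have hpos : 0 < (Finset.univ.filter (fun i : Fin m => (f i).1 = k)).card :=
    Finset.card_pos.mpr ⟨i₀, hmem⟩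
  omega
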